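/- Let n ≥ 1 and let M and M' be loopless matroids on ground sets Fin m and Fin m' respectively, all of whose bases have exactly n − 1 elements, and suppose M and M' admit realisations p : Fin m → (Fin (n−1) → k) and p' : Fin m' → (Fin (n−1) → k) over k. Then X_M = X_{M'} if and only if M and M' are isomorphic, i.e., there exists a bijection e : Fin m ≃ Fin m' such that for every B ⊆ Fin m, B is a base of M exactly when the image e '' B is a base of M'. -/

import Mathlib

noncomputable section

/-- `g : ℕ → ℕ → k` is a finitary invertible `ℕ×ℕ` matrix. -/
def IsFinGL {k : Type*} [Field k] (g : ℕ → ℕ → k) : Prop :=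
  ∃ N : ℕ, (∀ i j : ℕ, N ≤ i ∨ N ≤ j → g i j = if i = j then 1 else 0) ∧
    IsUnit (Matrix.of fun i j : Fin N => g i.1 j.1)

/-- A permutation of `ℕ` with finite support. -/
def IsFinPerm (σ : Equiv.Perm ℕ) : Prop := ∃ N : ℕ, ∀ i : ℕ, N ≤ i → σ i = i

/-- The action of `Sym` on `ℕ×ℕ` matrices by permuting rows. -/
def rowPerm {k : Type*} [Field k] (σ : Equiv.Perm ℕ) (A : ℕ → ℕ → k) : ℕ → ℕ → k :=
  fun i j => A (σ⁻¹ i) j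

/-- The action of `GL` on `ℕ×ℕ` matrices by right multiplication on columns:
`(A • g) i j = Σ_t A i t * g t j`, a finite sum since `g` is finitary. -/
def colMul {k : Type*} [Field k] (A : ℕ → ℕ → k) (g : ℕ → ℕ → k) : ℕ → ℕ → k :=
  fun i j => ∑ᶠ t : ℕ, A i t * g t j

/-- A subset of the space of `ℕ×ℕ` matrices is Zariski closed if it is the
common zero locus of a set of polynomials in the entries. -/
def IsZClosedMat {k : Type*} [Field k] (X : Set (ℕ → ℕ → k)) : Prop :=
  ∃ S : Set (MvPolynomial (ℕ × ℕ) k),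
    X = {A | ∀ f ∈ S, MvPolynomial.eval (fun p : ℕ × ℕ => A p.1 p.2) f = 0}

/-- The Zariski closure of a set of `ℕ×ℕ` matrices. -/
def zClosureMat {k : Type*} [Field k] (S : Set (ℕ → ℕ → k)) : Set (ℕ → ℕ → k) :=
  ⋂₀ {C | IsZClosedMat C ∧ S ⊆ C}

/-- `p : Fin a → (Fin (n-1) → k)` realises the matroid `N` on `Fin a` (all of
whose bases have `n - 1` elements) if an `(n-1)`-element subset `I` is a base
of `N` exactly when the corresponding family of rows is linearly independent. -/
def Realises {k : Type*} [Field k] (n a : ℕ) (N : Matroid (Fin a))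
    (p : Fin a → Fin (n - 1) → k) : Prop :=
  ∀ I : Finset (Fin a), I.card = n - 1 →
    (N.IsBase ↑I ↔ LinearIndependent k (fun e : I => p e))

/-- `R_N`: the set of `a × (n-1)` matrices `q` such that for every
`(n-1)`-element subset `I` that is not a base of `N`, the `(n-1)×(n-1)` matrix
with rows `(q e)_{e ∈ I}` is singular (i.e. its rows are linearly dependent). -/
def RSet (k : Type*) [Field k] (n a : ℕ) (N : Matroid (Fin a)) :
    Set (Fin a → Fin (n - 1) → k) :=
  {q | ∀ I : Finset (Fin a), I.card = n - 1 → ¬ N.IsBase ↑I →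
    ¬ LinearIndependent k (fun e : I => q e)}

/-- Extension of a finite matrix by zeros to an `ℕ×ℕ` matrix. -/
def extZero {k : Type*} [Field k] {a b : ℕ} (q : Fin a → Fin b → k) : ℕ → ℕ → k :=
  fun i j => if h : i < a ∧ j < b then q ⟨i, h.1⟩ ⟨j, h.2⟩ else 0

/-- `X_N`: the Zariski closure of the `Sym × GL`-orbit of `R_N` (with its
elements extended by zeros to `ℕ×ℕ` matrices). -/
def XSet (k : Type*) [Field k] (n a : ℕ) (N : Matroid (Fin a)) : Set (ℕ → ℕ → k) :=
  zClosureMat {A | ∃ q ∈ RSet k n a N, ∃ (σ : Equiv.Perm ℕ) (g : ℕ → ℕ → k),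
    IsFinPerm σ ∧ IsFinGL g ∧ A = colMul (rowPerm σ (extZero q)) g}

section Aux

variable {k : Type*} [Field k]

lemma subset_zClosureMat (S : Set (ℕ → ℕ → k)) : S ⊆ zClosureMat S := by
  intro A hA C hC
  exact hC.2 hA

lemma zClosureMat_subset {S C : Set (ℕ → ℕ → k)} (hC : IsZClosedMat C) (hSC : S ⊆ C) :
    zClosureMat S ⊆ C := fun A hA => hA C ⟨hC, hSC⟩

/-- The orbit is contained in its Zariski closure `XSet`. -/
lemma orbit_subset_XSet (n a : ℕ) (N : Matroid (Fin a)) :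
    {A : ℕ → ℕ → k | ∃ q ∈ RSet k n a N, ∃ (σ : Equiv.Perm ℕ) (g : ℕ → ℕ → k),
      IsFinPerm σ ∧ IsFinGL g ∧ A = colMul (rowPerm σ (extZero q)) g} ⊆ XSet k n a N :=
  subset_zClosureMat _

/-- `R_N` is stable under right multiplication by a square matrix together with
replacing some rows by zero. -/
lemma RSet_mul_zero {n a : ℕ} {N : Matroid (Fin a)} {q : Fin a → Fin (n - 1) → k}
    (hq : q ∈ RSet k n a N) (C : Matrix (Fin (n - 1)) (Fin (n - 1)) k)
    (q' : Fin a → Fin (n - 1) → k)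
    (hq' : ∀ j, q' j = Matrix.vecMul (q j) C ∨ q' j = 0) :
    q' ∈ RSet k n a N := by
  intro I hI hB hli
  by_cases hall : ∀ e ∈ I, q' e = Matrix.vecMul (q e) C
  · have h1 : (fun e : I => q' e) = (C.vecMulLinear ∘ fun e : I => q e) := by
      funext e
      simpa using hall e e.2
    rw [h1] at hli
    exact hq I hI hB (LinearIndependent.of_comp C.vecMulLinear hli)
  · push_neg at hall
    obtain ⟨e₀, he₀, hne⟩ := hall
    have h0 : q' e₀ = 0 := (hq' e₀).resolve_left hne
    exact hli.ne_zero (⟨e₀, he₀⟩ : I) h0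

lemma det_eq_zero_iff_not_linearIndependent {r : ℕ} (v : Fin r → Fin r → k) :
    (Matrix.of v).det = 0 ↔ ¬ LinearIndependent k v := by
  have h1 : LinearIndependent k v ↔ IsUnit (Matrix.of v) := by
    exact Matrix.linearIndependent_rows_iff_isUnit (A := Matrix.of v)
  rw [h1, Matrix.isUnit_iff_isUnit_det, isUnit_iff_ne_zero, not_not]


open Classical

/-- The zero locus of a set of polynomials. -/
def zLocus {k : Type*} [Field k] (S : Set (MvPolynomial (ℕ × ℕ) k)) : Set (ℕ → ℕ → k) :=
  {A | ∀ f ∈ S, MvPolynomial.eval (fun p : ℕ × ℕ => A p.1 p.2) f = 0}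

lemma isZClosedMat_zLocus {k : Type*} [Field k] (S : Set (MvPolynomial (ℕ × ℕ) k)) :
    IsZClosedMat (zLocus S) := ⟨S, rfl⟩

/-- A finite union of zero loci is a zero locus. -/
lemma isZClosedMat_iUnion {k : Type*} [Field k] {ι : Type*} [Fintype ι]
    (S : ι → Set (MvPolynomial (ℕ × ℕ) k)) :
    IsZClosedMat (⋃ i, zLocus (S i)) := by
  refine ⟨{g | ∃ F : ι → MvPolynomial (ℕ × ℕ) k, (∀ i, F i ∈ S i) ∧ g = ∏ i, F i}, ?_⟩
  ext A
  simp only [Set.mem_iUnion, Set.mem_setOf_eq]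
  constructor
  · rintro ⟨i₀, hi₀⟩ f ⟨F, hF, rfl⟩
    rw [map_prod]
    exact Finset.prod_eq_zero (Finset.mem_univ i₀) (hi₀ (F i₀) (hF i₀))
  · intro h
    by_contra hno
    push_neg at hno
    have key : ∀ i, ∃ f, f ∈ S i ∧ MvPolynomial.eval (fun p : ℕ × ℕ => A p.1 p.2) f ≠ 0 := by
      intro i
      have hi := hno i
      simp only [zLocus, Set.mem_setOf_eq] at hi
      push_neg at hi
      exact hi
    choose F hF hne using key
    have hz := h (∏ i, F i) ⟨F, hF, rfl⟩
    rw [map_prod] at hz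
    exact (Finset.prod_ne_zero_iff.mpr (fun i _ => hne i)) hz


variable {k : Type*} [Field k]

/-- The window set: matrices whose `L × (n-1)` upper-left window looks like a
(zero-padded, row-permuted) element of `R_N` times a matrix. -/
def ZWin (k : Type*) [Field k] (n a L : ℕ) (N : Matroid (Fin a)) : Set (ℕ → ℕ → k) :=
  {A | ∃ t : Fin a ↪ Fin L,
    (∀ i : Fin L, i ∉ Set.range t → ∀ c : Fin (n - 1), A i c = 0) ∧
    (fun (j : Fin a) (c : Fin (n - 1)) => A (t j) c) ∈ RSet k n a N}

def SWin (k : Type*) [Field k] (n a L : ℕ) (N : Matroid (Fin a)) (t : Fin a ↪ Fin L) :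
    Set (MvPolynomial (ℕ × ℕ) k) :=
  {f | (∃ i : Fin L, i ∉ Set.range t ∧ ∃ c : Fin (n - 1), f = MvPolynomial.X ((i : ℕ), (c : ℕ)))
    ∨ (∃ I : Finset (Fin a), ∃ hI : I.card = n - 1, ¬ N.IsBase ↑I ∧
        f = (Matrix.of fun r c : Fin (n - 1) =>
          MvPolynomial.X (((t ((I.equivFin.symm (finCongr hI.symm r) : I) : Fin a)) : ℕ),
            (c : ℕ))).det)}

lemma zLocus_SWin (n a L : ℕ) (N : Matroid (Fin a)) (t : Fin a ↪ Fin L) :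
    zLocus (SWin k n a L N t) =
      {A : ℕ → ℕ → k | (∀ i : Fin L, i ∉ Set.range t → ∀ c : Fin (n - 1), A i c = 0) ∧
        (fun (j : Fin a) (c : Fin (n - 1)) => A (t j) c) ∈ RSet k n a N} := by
  have hmap : ∀ (A : ℕ → ℕ → k) (I : Finset (Fin a)) (hI : I.card = n - 1),
      (Matrix.of fun r c : Fin (n - 1) =>
          MvPolynomial.X (σ := ℕ × ℕ) (R := k)
            (((t ((I.equivFin.symm (finCongr hI.symm r) : I) : Fin a)) : ℕ), (c : ℕ))).map
          (MvPolynomial.eval fun p : ℕ × ℕ => A p.1 p.2)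
        = Matrix.of (fun r c : Fin (n - 1) =>
            A ((t ((I.equivFin.symm (finCongr hI.symm r) : I) : Fin a)) : ℕ) (c : ℕ)) := by
    intro A I hI
    ext r c
    simp [Matrix.map_apply]
  ext A
  constructor
  · intro hA
    refine ⟨fun i hi c => ?_, fun I hI hB hli => ?_⟩
    · simpa using hA (MvPolynomial.X ((i : ℕ), (c : ℕ))) (Or.inl ⟨i, hi, c, rfl⟩)
    · have hd := hA _ (Or.inr ⟨I, hI, hB, rfl⟩)
      rw [RingHom.map_det, RingHom.mapMatrix_apply, hmap A I hI, det_eq_zero_iff_not_linearIndependent] at hd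
      exact hd ((linearIndependent_equiv ((finCongr hI.symm).trans I.equivFin.symm)
        (f := fun (e : I) (c : Fin (n - 1)) => A ((t e : Fin L) : ℕ) (c : ℕ))).mpr hli)
  · rintro ⟨h1, h2⟩ f (⟨i, hi, c, rfl⟩ | ⟨I, hI, hB, rfl⟩)
    · simpa using h1 i hi c
    · rw [RingHom.map_det, RingHom.mapMatrix_apply, hmap A I hI, det_eq_zero_iff_not_linearIndependent]
      intro hv
      exact h2 I hI hB ((linearIndependent_equiv ((finCongr hI.symm).trans I.equivFin.symm)
        (f := fun (e : I) (c : Fin (n - 1)) => A ((t e : Fin L) : ℕ) (c : ℕ))).mp hv)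

lemma isZClosedMat_ZWin (n a L : ℕ) (N : Matroid (Fin a)) :
    IsZClosedMat (ZWin k n a L N) := by
  have h : ZWin k n a L N = ⋃ t : Fin a ↪ Fin L, zLocus (SWin k n a L N t) := by
    ext A
    simp only [ZWin, zLocus_SWin, Set.mem_iUnion, Set.mem_setOf_eq]
  rw [h]
  exact isZClosedMat_iUnion _


/-- Every element of the `Sym x GL` orbit of `R_N` lies in the window set. -/
lemma orbit_elem_mem_ZWin {n a L : ℕ} (haL : a ≤ L) (N : Matroid (Fin a))
    {q : Fin a → Fin (n - 1) → k} (hq : q ∈ RSet k n a N)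
    (σ : Equiv.Perm ℕ) (g : ℕ → ℕ → k) :
    colMul (rowPerm σ (extZero q)) g ∈ ZWin k n a L N := by
  classical
  set A := colMul (rowPerm σ (extZero q)) g with hA
  have hrow0 : ∀ i : ℕ, (∀ j : Fin a, σ (j : ℕ) ≠ i) → ∀ c : ℕ, A i c = 0 := by
    intro i hi c
    have hinv : ¬ ((σ⁻¹ i : ℕ) < a) := by
      intro h
      exact hi ⟨σ⁻¹ i, h⟩ (by simp)
    have hz : ∀ s, extZero q (σ⁻¹ i) s = (0 : k) := by
      intro s
      simp only [extZero]
      exact dif_neg (fun h => hinv h.1)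
    simp only [hA, colMul, rowPerm, hz, zero_mul, finsum_zero]
  have hcards : Fintype.card {j : Fin a // ¬ (σ (j : ℕ) < L)} ≤
      Fintype.card {i : Fin L // ∀ j : Fin a, σ (j : ℕ) ≠ (i : ℕ)} := by
    have h1 : Fintype.card {j : Fin a // ¬ (σ (j : ℕ) < L)}
        = a - Fintype.card {j : Fin a // σ (j : ℕ) < L} := by
      rw [Fintype.card_subtype_compl, Fintype.card_fin]
    have e2 : {i : Fin L // ∀ j : Fin a, σ (j : ℕ) ≠ (i : ℕ)} ≃
        {i : Fin L // ¬ ∃ j : Fin a, σ (j : ℕ) = (i : ℕ)} :=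
      Equiv.subtypeEquivRight (fun i => not_exists.symm)
    have e3 : {j : Fin a // σ (j : ℕ) < L} ≃
        {i : Fin L // ∃ j : Fin a, σ (j : ℕ) = (i : ℕ)} := by
      refine Equiv.ofBijective (fun x => ⟨⟨σ (x.1 : ℕ), x.2⟩, ⟨x.1, rfl⟩⟩) ⟨?_, ?_⟩
      · intro x y hxy
        have hval : σ (x.1 : ℕ) = σ (y.1 : ℕ) := congrArg (fun z => (z.1 : ℕ)) hxy
        exact Subtype.ext (Fin.val_injective (σ.injective hval))
      · rintro ⟨i, j, hj⟩
        refine ⟨⟨j, by rw [hj]; exact i.2⟩, ?_⟩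
        exact Subtype.ext (Fin.ext hj)
    have h2 : Fintype.card {i : Fin L // ∀ j : Fin a, σ (j : ℕ) ≠ (i : ℕ)}
        = L - Fintype.card {j : Fin a // σ (j : ℕ) < L} := by
      rw [Fintype.card_congr e2, Fintype.card_subtype_compl, Fintype.card_fin,
        Fintype.card_congr e3.symm]
    rw [h1, h2]
    exact Nat.sub_le_sub_right haL _
  obtain ⟨u⟩ := Function.Embedding.nonempty_of_card_le hcards
  let t0 : Fin a → Fin L := fun j =>
    if h : σ (j : ℕ) < L then ⟨σ (j : ℕ), h⟩ else (u ⟨j, h⟩).1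
  have ht0 : Function.Injective t0 := by
    intro x y hxy
    by_cases hx : σ (x : ℕ) < L <;> by_cases hy : σ (y : ℕ) < L
    · simp only [t0, dif_pos hx, dif_pos hy] at hxy
      exact Fin.val_injective (σ.injective (congrArg Fin.val hxy))
    · simp only [t0, dif_pos hx, dif_neg hy] at hxy
      exact absurd (congrArg Fin.val hxy) ((u ⟨y, hy⟩).2 x)
    · simp only [t0, dif_neg hx, dif_pos hy] at hxy
      exact absurd (congrArg Fin.val hxy).symm ((u ⟨x, hx⟩).2 y)
    · simp only [t0, dif_neg hx, dif_neg hy] at hxy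
      have := u.injective (Subtype.coe_injective hxy)
      exact congrArg Subtype.val this
  have hnotin : ∀ i : Fin L, i ∉ Set.range t0 → ∀ j : Fin a, σ (j : ℕ) ≠ (i : ℕ) := by
    intro i hi j hj
    apply hi
    have hjL : σ (j : ℕ) < L := hj ▸ i.2
    exact ⟨j, by simp only [t0, dif_pos hjL]; exact Fin.ext hj⟩
  refine ⟨⟨t0, ht0⟩, ?_, ?_⟩
  · intro i hi c
    exact hrow0 i (hnotin i (by simpa using hi)) c
  · apply RSet_mul_zero hq (Matrix.of fun s c : Fin (n - 1) => g (s : ℕ) (c : ℕ))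
    intro j
    by_cases h : σ (j : ℕ) < L
    · left
      have ht : ((t0 j) : ℕ) = σ (j : ℕ) := by simp only [t0, dif_pos h]
      funext c
      show A ((t0 j) : ℕ) (c : ℕ) =
        Matrix.vecMul (q j) (Matrix.of fun s c : Fin (n - 1) => g (s : ℕ) (c : ℕ)) c
      rw [ht]
      have h1 : A (σ (j : ℕ)) (c : ℕ) = ∑ᶠ s : ℕ, extZero q (j : ℕ) s * g s (c : ℕ) := by
        simp only [hA, colMul, rowPerm, Equiv.Perm.inv_def, Equiv.symm_apply_apply]
      have h2 : Function.support (fun s : ℕ => extZero q (j : ℕ) s * g s (c : ℕ)) ⊆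
          ↑(Finset.range (n - 1)) := by
        intro s hs
        simp only [Function.mem_support] at hs
        by_contra hsn
        apply hs
        have hz : extZero q (j : ℕ) s = 0 := by
          simp only [extZero]
          rw [dif_neg]
          intro hcon
          exact hsn (Finset.mem_coe.mpr (Finset.mem_range.mpr hcon.2))
        rw [hz, zero_mul]
      rw [h1, finsum_eq_finset_sum_of_support_subset _ h2,
        ← Fin.sum_univ_eq_sum_range (fun s => extZero q (j : ℕ) s * g s (c : ℕ)) (n - 1)]
      simp [extZero, Matrix.vecMul, dotProduct, Fin.is_lt]
    · right
      have hsp := (u ⟨j, h⟩).2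
      have ht : ((t0 j) : ℕ) = ((u ⟨j, h⟩).1 : ℕ) := by simp only [t0, dif_neg h]
      funext c
      show A ((t0 j) : ℕ) (c : ℕ) = (0 : Fin (n - 1) → k) c
      rw [ht, Pi.zero_apply]
      exact hrow0 _ hsp c


/-- In a loopless realisation, every vector is nonzero. -/
lemma realises_ne_zero {n a : ℕ} {N : Matroid (Fin a)}
    (hrk : ∀ B : Set (Fin a), N.IsBase B → B.ncard = n - 1)
    (hloop : ∀ e : Fin a, N.Indep {e})
    {p : Fin a → Fin (n - 1) → k} (hp : Realises n a N p) (e : Fin a) : p e ≠ 0 := by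
  obtain ⟨B, hB, heB⟩ := (hloop e).exists_isBase_superset
  have hfin : B.Finite := Set.toFinite B
  have hcard : hfin.toFinset.card = n - 1 := by
    rw [← Set.ncard_eq_toFinset_card B hfin]
    exact hrk B hB
  have hbase : N.IsBase ↑hfin.toFinset := by rwa [Set.Finite.coe_toFinset]
  have hli := (hp hfin.toFinset hcard).mp hbase
  have hmem : e ∈ hfin.toFinset := hfin.mem_toFinset.mpr (heB rfl)
  exact hli.ne_zero ⟨e, hmem⟩

/-- From membership of the extended realisation matrix in a window set of another
matroid, extract an injection carrying bases to bases. -/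
lemma exists_inj_of_mem_ZWin {n ma a L : ℕ} (hmL : ma ≤ L) {M : Matroid (Fin ma)}
    {N : Matroid (Fin a)}
    {p : Fin ma → Fin (n - 1) → k} (hp : Realises n ma M p)
    (hpne : ∀ e, p e ≠ 0)
    (hmem : extZero p ∈ ZWin k n a L N) :
    ∃ ι : Fin ma → Fin a, Function.Injective ι ∧
      ∀ I : Finset (Fin ma), I.card = n - 1 → M.IsBase ↑I → N.IsBase ↑(I.image ι) := by
  classical
  obtain ⟨t, h0, hR⟩ := hmem
  have hrange : ∀ i : Fin ma, (⟨(i : ℕ), lt_of_lt_of_le i.2 hmL⟩ : Fin L) ∈ Set.range t := by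
    intro i
    by_contra hc
    obtain ⟨c, hc0⟩ : ∃ c : Fin (n - 1), p i c ≠ 0 := by
      by_contra hall
      push_neg at hall
      exact hpne i (funext fun c => hall c)
    apply hc0
    have hz := h0 _ hc c
    simpa [extZero, i.2, c.2] using hz
  choose ι hι using hrange
  have hinj : Function.Injective ι := by
    intro x y hxy
    have h1 : (⟨(x : ℕ), lt_of_lt_of_le x.2 hmL⟩ : Fin L)
        = ⟨(y : ℕ), lt_of_lt_of_le y.2 hmL⟩ := by
      rw [← hι x, ← hι y, hxy]
    have h2 : (x : ℕ) = (y : ℕ) := congrArg (fun z : Fin L => (z : ℕ)) h1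
    exact Fin.val_injective h2
  refine ⟨ι, hinj, fun I hI hB => ?_⟩
  by_contra hnb
  have hcard' : (I.image ι).card = n - 1 := by
    rw [Finset.card_image_of_injective I hinj, hI]
  apply hR (I.image ι) hcard' hnb
  have hli := (hp I hI).mp hB
  have hmemim : ∀ x : {x // x ∈ I}, ι ↑x ∈ I.image ι :=
    fun x => Finset.mem_image_of_mem ι x.2
  let eqv : {x // x ∈ I} ≃ {y // y ∈ I.image ι} :=
    Equiv.ofBijective (fun x => ⟨ι ↑x, hmemim x⟩)
      ⟨fun x y hxy => Subtype.ext (hinj (congrArg Subtype.val hxy)),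
       fun y => by
        obtain ⟨x, hx, hxy⟩ := Finset.mem_image.mp y.2
        exact ⟨⟨x, hx⟩, Subtype.ext hxy⟩⟩
  have hcomp : (fun (e : {y // y ∈ I.image ι}) (c : Fin (n - 1)) =>
      extZero p ((t e : Fin L) : ℕ) (c : ℕ)) ∘ eqv = fun (x : {x // x ∈ I}) => p ↑x := by
    funext x
    have htx : t (ι ↑x) = ⟨((x : Fin ma) : ℕ), lt_of_lt_of_le (x : Fin ma).2 hmL⟩ := hι ↑x
    funext c
    show extZero p ((t (ι ↑x) : Fin L) : ℕ) (c : ℕ) = p ↑x c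
    rw [htx]
    simp [extZero, (x : Fin ma).2, c.2]
  have : LinearIndependent k ((fun (e : {y // y ∈ I.image ι}) (c : Fin (n - 1)) =>
      extZero p ((t e : Fin L) : ℕ) (c : ℕ)) ∘ eqv) := by
    rw [hcomp]; exact hli
  exact (linearIndependent_equiv eqv).mp this

lemma extZero_mem_orbit {n a : ℕ} {N : Matroid (Fin a)} {q : Fin a → Fin (n - 1) → k}
    (hq : q ∈ RSet k n a N) :
    extZero q ∈ {A : ℕ → ℕ → k | ∃ q' ∈ RSet k n a N, ∃ (σ : Equiv.Perm ℕ) (g : ℕ → ℕ → k),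
      IsFinPerm σ ∧ IsFinGL g ∧ A = colMul (rowPerm σ (extZero q')) g} := by
  refine ⟨q, hq, 1, (fun i j => if i = j then (1 : k) else 0), ⟨0, fun i _ => rfl⟩,
    ⟨0, fun i j _ => rfl, (Matrix.isUnit_iff_isUnit_det _).mpr
      (by rw [Matrix.det_isEmpty]; exact isUnit_one)⟩, ?_⟩
  funext i j
  have hz : ∀ x : ℕ, x ≠ j →
      extZero q ((1 : Equiv.Perm ℕ)⁻¹ i) x * (if x = j then (1 : k) else 0) = 0 := by
    intro x hx
    simp [hx]
  show extZero q i j = colMul (rowPerm 1 (extZero q)) _ i j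
  simp only [colMul, rowPerm]
  rw [finsum_eq_single _ j hz]
  simp

lemma IsFinPerm.mul {σ τ : Equiv.Perm ℕ} (hσ : IsFinPerm σ) (hτ : IsFinPerm τ) :
    IsFinPerm (σ * τ) := by
  obtain ⟨N1, h1⟩ := hσ
  obtain ⟨N2, h2⟩ := hτ
  refine ⟨max N1 N2, fun i hi => ?_⟩
  have e2 : τ i = i := h2 i (le_trans (le_max_right _ _) hi)
  have e1 : σ i = i := h1 i (le_trans (le_max_left _ _) hi)
  simp [Equiv.Perm.mul_apply, e2, e1]

lemma IsFinPerm.inv {σ : Equiv.Perm ℕ} (hσ : IsFinPerm σ) : IsFinPerm σ⁻¹ := by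
  obtain ⟨N1, h1⟩ := hσ
  refine ⟨N1, fun i hi => ?_⟩
  calc σ⁻¹ i = σ⁻¹ (σ i) := by rw [h1 i hi]
  _ = i := Equiv.symm_apply_apply σ i

lemma isFinPerm_extend {a : ℕ} (f : Equiv.Perm (Fin a)) :
    IsFinPerm (f.extendDomain (Fin.equivSubtype : Fin a ≃ {i : ℕ // i < a})) :=
  ⟨a, fun i hi => Equiv.Perm.extendDomain_apply_not_subtype _ _ (not_lt.mpr hi)⟩

lemma rowPerm_extend_extZero {n a : ℕ} (f : Equiv.Perm (Fin a)) (q : Fin a → Fin (n - 1) → k) :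
    rowPerm (f.extendDomain (Fin.equivSubtype : Fin a ≃ {i : ℕ // i < a})) (extZero q)
      = extZero (fun j => q (f.symm j)) := by
  funext i j
  simp only [rowPerm]
  by_cases hi : i < a
  · have hinv : ((f.extendDomain (Fin.equivSubtype : Fin a ≃ {i : ℕ // i < a}))⁻¹ i)
        = ((f.symm ⟨i, hi⟩ : Fin a) : ℕ) := by
      rw [Equiv.Perm.extendDomain_inv]
      rw [Equiv.Perm.extendDomain_apply_subtype f⁻¹
        (Fin.equivSubtype : Fin a ≃ {i : ℕ // i < a}) hi]
      simp [Fin.equivSubtype]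
    rw [hinv]
    by_cases hj : j < n - 1
    · simp [extZero, hj, hi, (f.symm ⟨i, hi⟩).2]
    · simp [extZero, hj]
  · have hinv : ((f.extendDomain (Fin.equivSubtype : Fin a ≃ {i : ℕ // i < a}))⁻¹ i) = i := by
      rw [Equiv.Perm.extendDomain_inv]
      exact Equiv.Perm.extendDomain_apply_not_subtype f⁻¹
        (Fin.equivSubtype : Fin a ≃ {i : ℕ // i < a}) hi
    rw [hinv]
    simp [extZero, hi]

lemma rowPerm_rowPerm (σ τ : Equiv.Perm ℕ) (X : ℕ → ℕ → k) :
    rowPerm σ (rowPerm τ X) = rowPerm (σ * τ) X := by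
  funext i j
  simp [rowPerm, mul_inv_rev, Equiv.Perm.mul_apply]

lemma RSet_comp_equiv {n a : ℕ} {N N' : Matroid (Fin a)} (f : Equiv.Perm (Fin a))
    (hbase : ∀ I : Finset (Fin a), N.IsBase ↑I → N'.IsBase ↑(I.image f))
    {q : Fin a → Fin (n - 1) → k} (hq : q ∈ RSet k n a N) :
    (fun j => q (f.symm j)) ∈ RSet k n a N' := by
  classical
  intro I' hI' hB' hli
  have hcard : (I'.image f.symm).card = n - 1 := by
    rw [Finset.card_image_of_injective _ f.symm.injective, hI']
  have hBI : ¬ N.IsBase ↑(I'.image f.symm) := by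
    intro hB
    apply hB'
    have himg : (I'.image f.symm).image f = I' := by
      ext x
      simp only [Finset.mem_image]
      constructor
      · rintro ⟨y, ⟨z, hz, rfl⟩, rfl⟩
        simpa using hz
      · intro hx
        exact ⟨f.symm x, ⟨x, hx, rfl⟩, by simp⟩
    have h2 := hbase _ hB
    rwa [himg] at h2
  apply hq _ hcard hBI
  have hmem : ∀ x : {x // x ∈ I'.image f.symm}, f ↑x ∈ I' := by
    rintro ⟨x, hx⟩
    obtain ⟨y, hy, rfl⟩ := Finset.mem_image.mp hx
    simpa using hy
  let eqv : {x // x ∈ I'.image f.symm} ≃ {y // y ∈ I'} :=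
    ⟨fun x => ⟨f ↑x, hmem x⟩, fun y => ⟨f.symm ↑y, Finset.mem_image_of_mem _ y.2⟩,
     fun x => Subtype.ext (by simp), fun y => Subtype.ext (by simp)⟩
  have hli2 : LinearIndependent k ((fun e : {y // y ∈ I'} => q (f.symm ↑e)) ∘ eqv) :=
    (linearIndependent_equiv eqv).mpr hli
  have hcomp : (fun e : {y // y ∈ I'} => q (f.symm ↑e)) ∘ eqv
      = fun x : {x // x ∈ I'.image f.symm} => q ↑x := by
    funext x
    simp [eqv]
  rwa [hcomp] at hli2

lemma orbit_subset_orbit {n a : ℕ} {N N' : Matroid (Fin a)} (f : Equiv.Perm (Fin a))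
    (hbase : ∀ I : Finset (Fin a), N.IsBase ↑I → N'.IsBase ↑(I.image f)) :
    {A : ℕ → ℕ → k | ∃ q ∈ RSet k n a N, ∃ (σ : Equiv.Perm ℕ) (g : ℕ → ℕ → k),
      IsFinPerm σ ∧ IsFinGL g ∧ A = colMul (rowPerm σ (extZero q)) g}
    ⊆ {A : ℕ → ℕ → k | ∃ q ∈ RSet k n a N', ∃ (σ : Equiv.Perm ℕ) (g : ℕ → ℕ → k),
      IsFinPerm σ ∧ IsFinGL g ∧ A = colMul (rowPerm σ (extZero q)) g} := by
  rintro A ⟨q, hq, σ, g, hσ, hg, rfl⟩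
  set τ := f.extendDomain (Fin.equivSubtype : Fin a ≃ {i : ℕ // i < a}) with hτ
  refine ⟨fun j => q (f.symm j), RSet_comp_equiv f hbase hq, σ * τ⁻¹, g,
    hσ.mul (isFinPerm_extend f).inv, hg, ?_⟩
  rw [← rowPerm_extend_extZero f q, ← hτ, rowPerm_rowPerm, inv_mul_cancel_right]

end Aux

/-- For loopless matroids `M, M'` of rank `n - 1` on `Fin m`, `Fin m'` that are
realisable over `k`, the varieties `X_M` and `X_{M'}` coincide if and only if
`M` and `M'` are isomorphic. -/
theorem XSet_eq_XSet_iff_matroid_iso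
    {k : Type*} [Field k] [IsAlgClosed k] [CharZero k]
    (n : ℕ) (hn : 1 ≤ n) (m m' : ℕ)
    (M : Matroid (Fin m)) (M' : Matroid (Fin m'))
    (hME : M.E = Set.univ) (hM'E : M'.E = Set.univ)
    (hMrk : ∀ B : Set (Fin m), M.IsBase B → B.ncard = n - 1)
    (hM'rk : ∀ B : Set (Fin m'), M'.IsBase B → B.ncard = n - 1)
    (hMloopless : ∀ e : Fin m, M.Indep {e})
    (hM'loopless : ∀ e : Fin m', M'.Indep {e})
    (p : Fin m → Fin (n - 1) → k) (hp : Realises n m M p)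
    (p' : Fin m' → Fin (n - 1) → k) (hp' : Realises n m' M' p') :
    XSet k n m M = XSet k n m' M' ↔
      ∃ e : Fin m ≃ Fin m', ∀ B : Set (Fin m), M.IsBase B ↔ M'.IsBase (e '' B) := by
  classical
  constructor
  · intro hX
    have hpR : p ∈ RSet k n m M := fun I hc hnb hli => hnb ((hp I hc).mpr hli)
    have hp'R : p' ∈ RSet k n m' M' := fun I hc hnb hli => hnb ((hp' I hc).mpr hli)
    have hpne : ∀ e, p e ≠ 0 := realises_ne_zero hMrk hMloopless hp
    have hp'ne : ∀ e, p' e ≠ 0 := realises_ne_zero hM'rk hM'loopless hp'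
    set L := m + m' with hL
    have hsub' : XSet k n m' M' ⊆ ZWin k n m' L M' :=
      zClosureMat_subset (isZClosedMat_ZWin n m' L M')
        (by
          rintro A ⟨q, hq, σ, g, hσ, hg, rfl⟩
          exact orbit_elem_mem_ZWin (Nat.le_add_left m' m) M' hq σ g)
    have hsub : XSet k n m M ⊆ ZWin k n m L M :=
      zClosureMat_subset (isZClosedMat_ZWin n m L M)
        (by
          rintro A ⟨q, hq, σ, g, hσ, hg, rfl⟩
          exact orbit_elem_mem_ZWin (Nat.le_add_right m m') M hq σ g)
    have hpZ : extZero p ∈ ZWin k n m' L M' := by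
      apply hsub'
      rw [← hX]
      exact orbit_subset_XSet n m M (extZero_mem_orbit hpR)
    have hp'Z : extZero p' ∈ ZWin k n m L M := by
      apply hsub
      rw [hX]
      exact orbit_subset_XSet n m' M' (extZero_mem_orbit hp'R)
    obtain ⟨ι, hιinj, hιbase⟩ :=
      exists_inj_of_mem_ZWin (Nat.le_add_right m m') hp hpne hpZ
    obtain ⟨κ, hκinj, hκbase⟩ :=
      exists_inj_of_mem_ZWin (Nat.le_add_left m' m) hp' hp'ne hp'Z
    have hmm : m = m' := le_antisymm
      (by simpa using Fintype.card_le_of_embedding ⟨ι, hιinj⟩)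
      (by simpa using Fintype.card_le_of_embedding ⟨κ, hκinj⟩)
    subst hmm
    have hbij : Function.Bijective ι :=
      (Fintype.bijective_iff_injective_and_card ι).mpr ⟨hιinj, by simp⟩
    have hcardI : ∀ I : Finset (Fin m), M.IsBase ↑I → I.card = n - 1 := by
      intro I hB
      have h := hMrk ↑I hB
      rwa [Set.ncard_coe_finset] at h
    have hcardI' : ∀ I : Finset (Fin m), M'.IsBase ↑I → I.card = n - 1 := by
      intro I hB
      have h := hM'rk ↑I hB
      rwa [Set.ncard_coe_finset] at h
    set Bm : Finset (Finset (Fin m)) := Finset.univ.filter (fun I => M.IsBase ↑I) with hBm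
    set Bm' : Finset (Finset (Fin m)) := Finset.univ.filter (fun I => M'.IsBase ↑I) with hBm'
    have hmap1 : ∀ I ∈ Bm, I.image ι ∈ Bm' := by
      intro I hI
      simp only [hBm, hBm', Finset.mem_filter, Finset.mem_univ, true_and] at hI ⊢
      exact hιbase I (hcardI I hI) hI
    have hmap2 : ∀ I ∈ Bm', I.image κ ∈ Bm := by
      intro I hI
      simp only [hBm, hBm', Finset.mem_filter, Finset.mem_univ, true_and] at hI ⊢
      exact hκbase I (hcardI' I hI) hI
    have hc2 : Bm'.card ≤ Bm.card :=
      Finset.card_le_card_of_injOn (fun I => I.image κ) hmap2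
        (fun I _ J _ h => Finset.image_injective hκinj h)
    have himgBm : Bm.image (fun I => I.image ι) = Bm' := by
      apply Finset.eq_of_subset_of_card_le
      · intro J hJ
        obtain ⟨I, hI, rfl⟩ := Finset.mem_image.mp hJ
        exact hmap1 I hI
      · rw [Finset.card_image_of_injective _ (Finset.image_injective hιinj)]
        exact hc2
    refine ⟨Equiv.ofBijective ι hbij, fun B => ⟨fun hB => ?_, fun hB' => ?_⟩⟩
    · have hfin : B.Finite := Set.toFinite B
      have hBc : M.IsBase ↑hfin.toFinset := by rwa [Set.Finite.coe_toFinset]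
      have h1 := hιbase hfin.toFinset (hcardI _ hBc) hBc
      have himg : (↑(hfin.toFinset.image ι) : Set (Fin m)) = (Equiv.ofBijective ι hbij) '' B := by
        rw [Finset.coe_image, Set.Finite.coe_toFinset]
        rfl
      rwa [himg] at h1
    · have hfin : B.Finite := Set.toFinite B
      have himg : (↑(hfin.toFinset.image ι) : Set (Fin m)) = (Equiv.ofBijective ι hbij) '' B := by
        rw [Finset.coe_image, Set.Finite.coe_toFinset]
        rfl
      have hmem' : hfin.toFinset.image ι ∈ Bm' := by
        simp only [hBm', Finset.mem_filter, Finset.mem_univ, true_and]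
        rwa [himg]
      rw [← himgBm] at hmem'
      obtain ⟨I₀, hI₀, heq⟩ := Finset.mem_image.mp hmem'
      have hI0 : I₀ = hfin.toFinset := Finset.image_injective hιinj heq
      subst hI0
      simp only [hBm, Finset.mem_filter, Finset.mem_univ, true_and] at hI₀
      rwa [Set.Finite.coe_toFinset] at hI₀
  · rintro ⟨e, he⟩
    have hmm : m = m' := by
      have h := Fintype.card_congr e
      simpa using h
    subst hmm
    have horb : {A : ℕ → ℕ → k | ∃ q ∈ RSet k n m M, ∃ (σ : Equiv.Perm ℕ) (g : ℕ → ℕ → k),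
        IsFinPerm σ ∧ IsFinGL g ∧ A = colMul (rowPerm σ (extZero q)) g}
        = {A : ℕ → ℕ → k | ∃ q ∈ RSet k n m M', ∃ (σ : Equiv.Perm ℕ) (g : ℕ → ℕ → k),
        IsFinPerm σ ∧ IsFinGL g ∧ A = colMul (rowPerm σ (extZero q)) g} := by
      apply Set.Subset.antisymm
      · refine orbit_subset_orbit e (fun I hB => ?_)
        have h := (he ↑I).mp hB
        rwa [← Finset.coe_image] at h
      · refine orbit_subset_orbit e.symm (fun I hB => ?_)
        have h2 := he ↑(I.image ⇑e.symm)
        have him : e '' (↑(I.image ⇑e.symm) : Set (Fin m)) = ↑I := by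
          rw [Finset.coe_image, Set.image_image]
          simp
        exact h2.mpr (by rwa [him])
    unfold XSet
    rw [horb]
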